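/- Let G be an abelian group and g ∈ G a nonzero element of order p^n (p prime, n ≥ 1). Suppose G contains two distinct subgroups of order p. Then there exist proper subgroups H, K of G with g ∈ H + K, g ∉ H, and g ∉ K. -/
import Mathlib


theorem stmt16 {G : Type} [AddCommGroup G] (g : G) (hg : g ≠ 0)
    (p : ℕ) (hp : p.Prime) (n : ℕ) (hn : 1 ≤ n) (hord : addOrderOf g = p ^ n)
    (A B : AddSubgroup G) (hAB : A ≠ B)
    (hA : Nat.card A = p) (hB : Nat.card B = p) :
    ∃ H K : AddSubgroup G, H ≠ ⊤ ∧ K ≠ ⊤ ∧ g ∈ H ⊔ K ∧ g ∉ H ∧ g ∉ K := by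
  have hp1 : 1 < p := hp.one_lt
  have hppos : 0 < p := hp.pos
  set Z := AddSubgroup.zmultiples g with hZdef
  have hgfin : IsOfFinAddOrder g := by
    rw [← addOrderOf_pos_iff, hord]; positivity
  -- order of elements of a subgroup of card p
  have horddvd : ∀ (C : AddSubgroup G), Nat.card C = p → ∀ c ∈ C, addOrderOf c ∣ p := by
    intro C hC c hc
    have := AddSubgroup.addOrderOf_dvd_natCard C hc
    rwa [hC] at this
  have hordp : ∀ (C : AddSubgroup G), Nat.card C = p → ∀ c ∈ C, c ≠ 0 → addOrderOf c = p := by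
    intro C hC c hc hcne
    rcases (Nat.dvd_prime hp).mp (horddvd C hC c hc) with h1 | h1
    · exact absurd (AddMonoid.addOrderOf_eq_one_iff.mp h1) hcne
    · exact h1
  -- uniqueness of order p subgroups inside Z
  set x : G := (p ^ (n - 1)) • g with hxdef
  have hxord : addOrderOf x = p := by
    rw [hxdef, addOrderOf_nsmul_of_dvd (pow_pos hppos (n-1)).ne'
      (by rw [hord]; exact pow_dvd_pow p (Nat.sub_le n 1)), hord,
      Nat.pow_div (Nat.sub_le n 1) hppos, show n - (n - 1) = 1 by omega, pow_one]
  have hxfin : IsOfFinAddOrder x := by rw [← addOrderOf_pos_iff, hxord]; exact hppos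
  haveI : Finite (AddSubgroup.zmultiples x) := hxfin.finite_zmultiples.to_subtype
  have key : ∀ (C : AddSubgroup G), Nat.card C = p → C ≤ Z → C = AddSubgroup.zmultiples x := by
    intro C hC hCle
    have hle : C ≤ AddSubgroup.zmultiples x := by
      intro c hc
      obtain ⟨k, hk⟩ := AddSubgroup.mem_zmultiples_iff.mp (hCle hc)
      have hpc : p • c = 0 := addOrderOf_dvd_iff_nsmul_eq_zero.mp (horddvd C hC c hc)
      have : ((p : ℤ) * k) • g = 0 := by
        rw [mul_smul, hk, natCast_zsmul]; exact hpc
      have hdvd : ((p : ℤ) ^ n) ∣ (p : ℤ) * k := by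
        have h := addOrderOf_dvd_iff_zsmul_eq_zero.mpr this
        rw [hord] at h
        exact_mod_cast h
      have hdvd2 : ((p : ℤ) ^ (n - 1)) ∣ k := by
        have : (p : ℤ) * (p : ℤ) ^ (n - 1) ∣ (p : ℤ) * k := by
          rw [← pow_succ']
          have : n - 1 + 1 = n := by omega
          rwa [this]
        exact (mul_dvd_mul_iff_left (by exact_mod_cast hppos.ne')).mp this
      obtain ⟨m, hm⟩ := hdvd2
      refine AddSubgroup.mem_zmultiples_iff.mpr ⟨m, ?_⟩
      rw [← hk, hm, mul_comm, mul_smul, hxdef,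
        show ((p : ℤ)) ^ (n - 1) = (((p ^ (n - 1) : ℕ)) : ℤ) by push_cast; ring,
        natCast_zsmul]
    refine AddSubgroup.eq_of_le_of_card_ge hle ?_
    rw [hC, Nat.card_zmultiples, hxord]
  -- choose C not contained in Z
  have hchoice : ∃ C : AddSubgroup G, Nat.card C = p ∧ ¬ C ≤ Z := by
    by_cases hA' : A ≤ Z
    · refine ⟨B, hB, fun hB' => hAB ?_⟩
      rw [key A hA hA', key B hB hB']
    · exact ⟨A, hA, hA'⟩
  obtain ⟨C, hCcard, hCnle⟩ := hchoice
  haveI : Finite C := Nat.finite_of_card_ne_zero (by rw [hCcard]; omega)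
  -- intersection of C and Z is trivial
  have hinter : ∀ c ∈ C, c ∈ Z → c = 0 := by
    intro c hc hcZ
    by_contra hcne
    have hco : addOrderOf c = p := hordp C hCcard c hc hcne
    have hle : AddSubgroup.zmultiples c ≤ C := AddSubgroup.zmultiples_le_of_mem hc
    haveI : Finite (AddSubgroup.zmultiples c) := Finite.Set.subset _ hle
    have heq : AddSubgroup.zmultiples c = C :=
      AddSubgroup.eq_of_le_of_card_ge hle (by rw [hCcard, Nat.card_zmultiples, hco])
    exact hCnle (heq ▸ AddSubgroup.zmultiples_le_of_mem hcZ)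
  have hgC : g ∉ C := fun h => hg (hinter g h (AddSubgroup.mem_zmultiples g))
  -- pick a ∈ C \ Z
  obtain ⟨a, haC, haZ⟩ := SetLike.not_le_iff_exists.mp hCnle
  have hane : a ≠ 0 := fun h => haZ (h ▸ (AddSubgroup.zmultiples g).zero_mem)
  have haord : addOrderOf a = p := hordp C hCcard a haC hane
  refine ⟨AddSubgroup.zmultiples (g + a), C, ?_, ?_, ?_, ?_, hgC⟩
  · -- a ∉ H hence H ≠ ⊤
    intro htop
    have ha : a ∈ AddSubgroup.zmultiples (g + a) := htop ▸ AddSubgroup.mem_top a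
    obtain ⟨m, hm⟩ := AddSubgroup.mem_zmultiples_iff.mp ha
    rw [smul_add] at hm
    have h1 : m • g = (1 - m) • a := by
      rw [sub_smul, one_smul]; linear_combination (norm := abel) hm
    have h2 : (1 - m) • a = 0 := by
      refine hinter _ (AddSubgroup.zsmul_mem C haC _) ?_
      rw [← h1]
      exact AddSubgroup.zsmul_mem Z (AddSubgroup.mem_zmultiples g) m
    have h3 : m • g = 0 := by rw [h1, h2]
    have hd1 : (p : ℤ) ∣ 1 - m := by
      rw [← haord]; exact addOrderOf_dvd_iff_zsmul_eq_zero.mpr h2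
    have hd2 : (p : ℤ) ∣ m := by
      have := addOrderOf_dvd_iff_zsmul_eq_zero.mpr h3
      rw [hord, Int.natCast_pow] at this
      exact dvd_trans (dvd_pow_self _ (by omega)) this
    have : (p : ℤ) ∣ 1 := by
      have := dvd_add hd1 hd2; simpa using this
    have hple : p ∣ 1 := by exact_mod_cast this
    simp [Nat.dvd_one] at hple; omega
  · -- K ≠ ⊤
    intro htop
    exact hgC (htop ▸ AddSubgroup.mem_top g)
  · -- g ∈ H ⊔ K
    have h1 : g + a ∈ AddSubgroup.zmultiples (g + a) ⊔ C :=
      AddSubgroup.mem_sup_left (AddSubgroup.mem_zmultiples _)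
    have h2 : a ∈ AddSubgroup.zmultiples (g + a) ⊔ C := AddSubgroup.mem_sup_right haC
    have := AddSubgroup.sub_mem _ h1 h2
    simpa using this
  · -- g ∉ H
    intro hgH
    obtain ⟨m, hm⟩ := AddSubgroup.mem_zmultiples_iff.mp hgH
    rw [smul_add] at hm
    have h1 : m • a = (1 - m) • g := by
      rw [sub_smul, one_smul]; linear_combination (norm := abel) hm
    have h2 : m • a = 0 := by
      refine hinter _ (AddSubgroup.zsmul_mem C haC _) ?_
      rw [h1]
      exact AddSubgroup.zsmul_mem Z (AddSubgroup.mem_zmultiples g) _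
    have h3 : (1 - m) • g = 0 := by rw [← h1, h2]
    have hd1 : (p : ℤ) ∣ m := by
      rw [← haord]; exact addOrderOf_dvd_iff_zsmul_eq_zero.mpr h2
    have hd2 : (p : ℤ) ∣ 1 - m := by
      have := addOrderOf_dvd_iff_zsmul_eq_zero.mpr h3
      rw [hord, Int.natCast_pow] at this
      exact dvd_trans (dvd_pow_self _ (by omega)) this
    have : (p : ℤ) ∣ 1 := by
      have := dvd_add hd1 hd2; simpa using this
    have hple : p ∣ 1 := by exact_mod_cast this
    simp [Nat.dvd_one] at hple; omega
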